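/- arXiv:2304.13091 — 2 statements merged into one kernel-verified Lean document; each statement's English description precedes it below -/
import Mathlib

section
/- Let P, Q be probability distributions on ℝ with everywhere positive continuous densities f_X, f_Y and CDFs F_X, F_Y, and let X ∼ P. Let Q_P^{SD} denote the law of W = 2 F_Y(X)(1 − F_Y(X)), and let R denote the distribution on [0, 1/2] with density r(z) = 1/√(1 − 2z). Then TVD(Q_P^{SD}, R) ≤ TVD(P, Q); by symmetry also TVD(P_Q^{SD}, R) ≤ TVD(P, Q), where P_Q^{SD} is the law of 2 F_X(Y)(1 − F_X(Y)) for Y ∼ Q. -/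
open MeasureTheory Set

/-- The total variation distance between two measures on `ℝ`, computed via their
densities (Radon–Nikodym derivatives) with respect to Lebesgue measure:
`TVD(P,Q) = (1/2) ∫ |p(x) - q(x)| dx`. -/

noncomputable def TVD (μ ν : Measure ℝ) : ℝ :=
  (1 / 2) * ∫ x, |(μ.rnDeriv volume x).toReal - (ν.rnDeriv volume x).toReal|

lemma TVD_comm (μ ν : Measure ℝ) : TVD μ ν = TVD ν μ := by
  simp only [TVD, abs_sub_comm]

/-- For probability measures AC w.r.t. volume, `μ A - ν A ≤ TVD μ ν`. -/
lemma diff_le_TVD (μ ν : Measure ℝ) [IsProbabilityMeasure μ] [IsProbabilityMeasure ν]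
    (hμ : μ ≪ volume) (hν : ν ≪ volume) (A : Set ℝ) (hA : MeasurableSet A) :
    (μ A).toReal - (ν A).toReal ≤ TVD μ ν := by
  set p := fun x => (μ.rnDeriv volume x).toReal with hp
  set q := fun x => (ν.rnDeriv volume x).toReal with hq
  have hpi : Integrable p := Measure.integrable_toReal_rnDeriv
  have hqi : Integrable q := Measure.integrable_toReal_rnDeriv
  have hint : Integrable (fun x => p x - q x) := hpi.sub hqi
  have habs : Integrable (fun x => |p x - q x|) := hint.abs
  have hμA : ∫ x in A, p x = (μ A).toReal := Measure.setIntegral_toReal_rnDeriv hμ A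
  have hνA : ∫ x in A, q x = (ν A).toReal := Measure.setIntegral_toReal_rnDeriv hν A
  have hμc : ∫ x in Aᶜ, p x = (μ Aᶜ).toReal := Measure.setIntegral_toReal_rnDeriv hμ Aᶜ
  have hνc : ∫ x in Aᶜ, q x = (ν Aᶜ).toReal := Measure.setIntegral_toReal_rnDeriv hν Aᶜ
  have hcompl : (μ Aᶜ).toReal - (ν Aᶜ).toReal = -(((μ A).toReal) - (ν A).toReal) := by
    have h1 : (μ A).toReal + (μ Aᶜ).toReal = 1 := by
      rw [← ENNReal.toReal_add (measure_ne_top _ _) (measure_ne_top _ _),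
        measure_add_measure_compl hA]; simp
    have h2 : (ν A).toReal + (ν Aᶜ).toReal = 1 := by
      rw [← ENNReal.toReal_add (measure_ne_top _ _) (measure_ne_top _ _),
        measure_add_measure_compl hA]; simp
    linarith
  have hsplit : ∫ x, |p x - q x| = (∫ x in A, |p x - q x|) + ∫ x in Aᶜ, |p x - q x| := by
    rw [← integral_add_compl hA habs]
  have h1 : (μ A).toReal - (ν A).toReal ≤ ∫ x in A, |p x - q x| := by
    rw [← hμA, ← hνA, ← integral_sub (hpi.integrableOn) (hqi.integrableOn)]
    exact setIntegral_mono (hint.integrableOn) (habs.integrableOn)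
      (fun x => le_abs_self _)
  have h2 : (μ A).toReal - (ν A).toReal ≤ ∫ x in Aᶜ, |p x - q x| := by
    have := hcompl
    have h2' : (ν Aᶜ).toReal - (μ Aᶜ).toReal ≤ ∫ x in Aᶜ, |p x - q x| := by
      rw [← hμc, ← hνc, ← integral_sub (hqi.integrableOn) (hpi.integrableOn)]
      refine setIntegral_mono ((hqi.sub hpi).integrableOn) (habs.integrableOn)
        (fun x => ?_)
      rw [abs_sub_comm]; exact le_abs_self _
    linarith
  have : 2 * ((μ A).toReal - (ν A).toReal) ≤ ∫ x, |p x - q x| := by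
    rw [hsplit]; linarith
  rw [TVD]; linarith

lemma TVD_eq_diff (μ ν : Measure ℝ) [IsProbabilityMeasure μ] [IsProbabilityMeasure ν]
    (hμ : μ ≪ volume) (hν : ν ≪ volume) :
    ∃ A : Set ℝ, MeasurableSet A ∧ TVD μ ν = (μ A).toReal - (ν A).toReal := by
  set p := fun x => (μ.rnDeriv volume x).toReal with hp
  set q := fun x => (ν.rnDeriv volume x).toReal with hq
  have hpm : Measurable p := (Measure.measurable_rnDeriv _ _).ennreal_toReal
  have hqm : Measurable q := (Measure.measurable_rnDeriv _ _).ennreal_toReal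
  refine ⟨{x | q x ≤ p x}, measurableSet_le hqm hpm, ?_⟩
  set A := {x | q x ≤ p x} with hA
  have hAm : MeasurableSet A := measurableSet_le hqm hpm
  have hpi : Integrable p := Measure.integrable_toReal_rnDeriv
  have hqi : Integrable q := Measure.integrable_toReal_rnDeriv
  have habs : Integrable (fun x => |p x - q x|) := (hpi.sub hqi).abs
  have hμA : ∫ x in A, p x = (μ A).toReal := Measure.setIntegral_toReal_rnDeriv hμ A
  have hνA : ∫ x in A, q x = (ν A).toReal := Measure.setIntegral_toReal_rnDeriv hν A
  have hμc : ∫ x in Aᶜ, p x = (μ Aᶜ).toReal := Measure.setIntegral_toReal_rnDeriv hμ Aᶜ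
  have hνc : ∫ x in Aᶜ, q x = (ν Aᶜ).toReal := Measure.setIntegral_toReal_rnDeriv hν Aᶜ
  have hiA : ∫ x in A, |p x - q x| = ∫ x in A, (p x - q x) := by
    refine setIntegral_congr_fun hAm (fun x hx => ?_)
    exact abs_of_nonneg (sub_nonneg.2 hx)
  have hiAc : ∫ x in Aᶜ, |p x - q x| = ∫ x in Aᶜ, (q x - p x) := by
    refine setIntegral_congr_fun hAm.compl (fun x hx => ?_)
    have : p x < q x := lt_of_not_ge hx
    rw [abs_sub_comm]
    exact abs_of_nonneg (sub_nonneg.2 this.le)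
  have hsplit : ∫ x, |p x - q x| = (∫ x in A, |p x - q x|) + ∫ x in Aᶜ, |p x - q x| := by
    rw [← integral_add_compl hAm habs]
  have hvA : ∫ x in A, (p x - q x) = (μ A).toReal - (ν A).toReal := by
    rw [integral_sub hpi.integrableOn hqi.integrableOn, hμA, hνA]
  have hvAc : ∫ x in Aᶜ, (q x - p x) = (ν Aᶜ).toReal - (μ Aᶜ).toReal := by
    rw [integral_sub hqi.integrableOn hpi.integrableOn, hμc, hνc]
  have hcompl : (ν Aᶜ).toReal - (μ Aᶜ).toReal = (μ A).toReal - (ν A).toReal := by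
    have h1 : (μ A).toReal + (μ Aᶜ).toReal = 1 := by
      rw [← ENNReal.toReal_add (measure_ne_top _ _) (measure_ne_top _ _),
        measure_add_measure_compl hAm]; simp
    have h2 : (ν A).toReal + (ν Aᶜ).toReal = 1 := by
      rw [← ENNReal.toReal_add (measure_ne_top _ _) (measure_ne_top _ _),
        measure_add_measure_compl hAm]; simp
    linarith
  rw [TVD, hsplit, hiA, hiAc, hvA, hvAc, hcompl]; ring

/-- Data processing inequality. -/
lemma tvd_map_le (P Q : Measure ℝ) [IsProbabilityMeasure P] [IsProbabilityMeasure Q]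
    (hP : P ≪ volume) (hQ : Q ≪ volume) (T : ℝ → ℝ) (hT : Measurable T)
    (hmP : Measure.map T P ≪ volume) (hmQ : Measure.map T Q ≪ volume) :
    TVD (Measure.map T P) (Measure.map T Q) ≤ TVD P Q := by
  have : IsProbabilityMeasure (Measure.map T P) := Measure.isProbabilityMeasure_map hT.aemeasurable
  have : IsProbabilityMeasure (Measure.map T Q) := Measure.isProbabilityMeasure_map hT.aemeasurable
  obtain ⟨A, hAm, hAe⟩ := TVD_eq_diff (Measure.map T P) (Measure.map T Q) hmP hmQ
  rw [hAe, Measure.map_apply hT hAm, Measure.map_apply hT hAm]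
  exact diff_le_TVD P Q hP hQ _ (hT hAm)


lemma integrable_of_density (f : ℝ → ℝ) (hfpos : ∀ x, 0 < f x) (hfc : Continuous f)
    (Q : Measure ℝ) [IsProbabilityMeasure Q]
    (hQ : Q = volume.withDensity (fun x => ENNReal.ofReal (f x))) :
    Integrable f := by
  refine ⟨hfc.aestronglyMeasurable, ?_⟩
  rw [hasFiniteIntegral_iff_ofReal (ae_of_all _ (fun x => (hfpos x).le))]
  have : ∫⁻ x, ENNReal.ofReal (f x) = Q univ := by
    rw [hQ, withDensity_apply _ MeasurableSet.univ, Measure.restrict_univ]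
  rw [this, measure_univ]
  exact ENNReal.one_lt_top

lemma cdf_sub (f : ℝ → ℝ) (hfpos : ∀ x, 0 < f x) (hfc : Continuous f)
    (Q : Measure ℝ) [IsProbabilityMeasure Q]
    (hQ : Q = volume.withDensity (fun x => ENNReal.ofReal (f x)))
    (F : ℝ → ℝ) (hF : ∀ x, F x = (Q (Iic x)).toReal) :
    ∀ a b : ℝ, a ≤ b → F b - F a = ∫ x in a..b, f x := by
  intro a b hab
  have hdisj : Disjoint (Iic a) (Ioc a b) := by
    rw [Set.disjoint_left]; intro x hx hx2; exact absurd hx2.1 (not_lt.2 hx)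
  have hunion : Iic a ∪ Ioc a b = Iic b := Set.Iic_union_Ioc_eq_Iic hab
  have hmeas : Q (Iic b) = Q (Iic a) + Q (Ioc a b) := by
    rw [← hunion, measure_union hdisj measurableSet_Ioc]
  have hne : ∀ s : Set ℝ, Q s ≠ ⊤ := fun s => measure_ne_top Q s
  have hQIoc : (Q (Ioc a b)).toReal = ∫ x in Ioc a b, f x := by
    rw [hQ, withDensity_apply _ measurableSet_Ioc,
      ← ofReal_integral_eq_lintegral_ofReal
        ((integrable_of_density f hfpos hfc Q hQ).integrableOn)
        (ae_of_all _ (fun x => (hfpos x).le)),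
      ENNReal.toReal_ofReal (integral_nonneg (fun x => (hfpos x).le))]
  rw [hF a, hF b, intervalIntegral.integral_of_le hab, ← hQIoc, hmeas,
    ENNReal.toReal_add (hne _) (hne _)]
  ring

lemma cdf_hasDerivAt (f : ℝ → ℝ) (hfpos : ∀ x, 0 < f x) (hfc : Continuous f)
    (Q : Measure ℝ) [IsProbabilityMeasure Q]
    (hQ : Q = volume.withDensity (fun x => ENNReal.ofReal (f x)))
    (F : ℝ → ℝ) (hF : ∀ x, F x = (Q (Iic x)).toReal) :
    ∀ x, HasDerivAt F (f x) x := by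
  have hint : Integrable f := integrable_of_density f hfpos hfc Q hQ
  have key : ∀ x, F x = F 0 + ∫ t in (0:ℝ)..x, f t := by
    intro x
    rcases le_total (0:ℝ) x with h | h
    · have := cdf_sub f hfpos hfc Q hQ F hF 0 x h; linarith
    · have := cdf_sub f hfpos hfc Q hQ F hF x 0 h
      rw [intervalIntegral.integral_symm]; linarith
  intro x
  have hd : HasDerivAt (fun u => ∫ t in (0:ℝ)..u, f t) (f x) x :=
    intervalIntegral.integral_hasDerivAt_right (hint.intervalIntegrable)
      hfc.aestronglyMeasurable.stronglyMeasurableAtFilter (hfc.continuousAt)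
  have h2 : HasDerivAt (fun u => F 0 + ∫ t in (0:ℝ)..u, f t) (f x) x := (hd.const_add _)
  have hfun : F = fun u => F 0 + ∫ t in (0:ℝ)..u, f t := funext key
  rw [hfun]
  exact h2

lemma cdf_props (f : ℝ → ℝ) (hfpos : ∀ x, 0 < f x) (hfc : Continuous f)
    (Q : Measure ℝ) [IsProbabilityMeasure Q]
    (hQ : Q = volume.withDensity (fun x => ENNReal.ofReal (f x)))
    (F : ℝ → ℝ) (hF : ∀ x, F x = (Q (Iic x)).toReal) :
    StrictMono F ∧ Continuous F ∧ (∀ x, F x ∈ Ioo (0:ℝ) 1) ∧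
      (∀ c ∈ Ioo (0:ℝ) 1, ∃ x, F x = c) := by
  have hd := cdf_hasDerivAt f hfpos hfc Q hQ F hF
  have hdiff : Differentiable ℝ F := fun x => (hd x).differentiableAt
  have hmono : StrictMono F := by
    apply strictMono_of_deriv_pos
    intro x; rw [(hd x).deriv]; exact hfpos x
  have hcont : Continuous F := hdiff.continuous
  have hnn : ∀ x, 0 ≤ F x := fun x => by rw [hF]; exact ENNReal.toReal_nonneg
  have hle1 : ∀ x, F x ≤ 1 := fun x => by
    rw [hF]
    have : Q (Iic x) ≤ 1 := by rw [← measure_univ (μ := Q)]; exact measure_mono (subset_univ _)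
    exact le_trans (ENNReal.toReal_mono ENNReal.one_ne_top this) (by simp)
  have hIoo : ∀ x, F x ∈ Ioo (0:ℝ) 1 := by
    intro x
    constructor
    · exact lt_of_le_of_lt (hnn (x - 1)) (hmono (by linarith))
    · exact lt_of_lt_of_le (hmono (show x < x + 1 by linarith)) (hle1 (x + 1))
  refine ⟨hmono, hcont, hIoo, ?_⟩
  -- surjectivity via limits
  have hbot : Filter.Tendsto (fun n : ℕ => F (-(n:ℝ))) Filter.atTop (nhds 0) := by
    have hiInt : (⋂ n : ℕ, Iic (-(n:ℝ))) = ∅ := by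
      ext x
      simp only [mem_iInter, mem_Iic, mem_empty_iff_false, iff_false, not_forall, not_le]
      obtain ⟨n, hn⟩ := exists_nat_gt (-x)
      exact ⟨n, by linarith⟩
    have h1 : Filter.Tendsto (fun n : ℕ => Q (Iic (-(n:ℝ)))) Filter.atTop (nhds 0) := by
      have := tendsto_measure_iInter_atTop (μ := Q)
        (fun n : ℕ => measurableSet_Iic.nullMeasurableSet)
        (fun m n hmn => Iic_subset_Iic.2 (by exact_mod_cast neg_le_neg (Nat.cast_le.2 hmn)))
        ⟨0, measure_ne_top _ _⟩
      rwa [hiInt, measure_empty] at this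
    have := (ENNReal.tendsto_toReal (by simp)).comp h1
    simpa using this.congr (fun n => by rw [Function.comp_apply, hF])
  have htop : Filter.Tendsto F Filter.atTop (nhds 1) := by
    have h1 : Filter.Tendsto (fun x => Q (Iic x)) Filter.atTop (nhds (Q univ)) :=
      tendsto_measure_Iic_atTop Q
    have := (ENNReal.tendsto_toReal (by simp)).comp h1
    have h2 : Filter.Tendsto F Filter.atTop (nhds ((Q univ).toReal)) :=
      this.congr (fun x => by rw [Function.comp_apply, hF])
    simpa [measure_univ] using h2
  intro c hc
  obtain ⟨a, ha⟩ : ∃ a, F a < c := by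
    obtain ⟨n, hn⟩ := (hbot.eventually_lt_const hc.1).exists
    exact ⟨-(n:ℝ), hn⟩
  obtain ⟨b, hb⟩ : ∃ b, c < F b := by
    have := htop.eventually_const_lt hc.2
    exact this.exists
  have hab : a ≤ b := by
    by_contra h
    exact absurd (hmono (lt_of_not_ge h)) (by linarith)
  obtain ⟨x, _, hx⟩ := intermediate_value_Icc hab (hcont.continuousOn)
    (⟨ha.le, hb.le⟩ : c ∈ Icc (F a) (F b))
  exact ⟨x, hx⟩

lemma cdf_level_le (f : ℝ → ℝ) (hfpos : ∀ x, 0 < f x) (hfc : Continuous f)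
    (Q : Measure ℝ) [IsProbabilityMeasure Q]
    (hQ : Q = volume.withDensity (fun x => ENNReal.ofReal (f x)))
    (F : ℝ → ℝ) (hF : ∀ x, F x = (Q (Iic x)).toReal)
    (c : ℝ) (hc : c ∈ Ioo (0:ℝ) 1) :
    Q {x | F x ≤ c} = ENNReal.ofReal c ∧ Q {x | c ≤ F x} = ENNReal.ofReal (1 - c) := by
  obtain ⟨hmono, hcont, hIoo, hsurj⟩ := cdf_props f hfpos hfc Q hQ F hF
  obtain ⟨x₀, hx₀⟩ := hsurj c hc
  have hIic : {x | F x ≤ c} = Iic x₀ := by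
    ext x; simp only [mem_setOf_eq, mem_Iic, ← hx₀, hmono.le_iff_le]
  have hQIic : Q (Iic x₀) = ENNReal.ofReal c := by
    rw [← hx₀, hF, ENNReal.ofReal_toReal (measure_ne_top _ _)]
  have hsing : Q {x₀} = 0 := by
    rw [hQ]
    exact withDensity_absolutelyContinuous _ _ (Real.volume_singleton)
  refine ⟨by rw [hIic, hQIic], ?_⟩
  have hIci : {x | c ≤ F x} = Ici x₀ := by
    ext x; simp only [mem_setOf_eq, mem_Ici, ← hx₀, hmono.le_iff_le]
  have hIio : Q (Iio x₀) = ENNReal.ofReal c := by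
    have : Q (Iic x₀) = Q (Iio x₀) + Q {x₀} := by
      rw [← measure_union (by simp only [Set.disjoint_left, mem_Iio, mem_singleton_iff]; intro a h; exact ne_of_lt h) (measurableSet_singleton _),
        Iio_union_right]
    rw [hsing, add_zero] at this
    rw [← this, hQIic]
  rw [hIci, ← compl_Iio, measure_compl measurableSet_Iio (measure_ne_top _ _), measure_univ, hIio,
    ← ENNReal.ofReal_one, ← ENNReal.ofReal_sub _ hc.1.le]


noncomputable def rdens : ℝ → ENNReal := fun z =>
  ENNReal.ofReal (indicator (Icc (0 : ℝ) (1 / 2)) (fun z => 1 / Real.sqrt (1 - 2 * z)) z)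

lemma rdens_zero {z : ℝ} (hz : z ∉ Icc (0:ℝ) (1/2) ∨ z = 1/2) : rdens z = 0 := by
  rcases hz with h | h
  · simp only [rdens, indicator_of_notMem h, ENNReal.ofReal_zero]
  · subst h
    have hm : (1/2 : ℝ) ∈ Icc (0:ℝ) (1/2) := by constructor <;> norm_num
    rw [rdens, indicator_of_mem hm]
    norm_num

lemma hasDeriv_neg_sqrt {t : ℝ} (ht : 0 < 1 - 2 * t) :
    HasDerivAt (fun u => -Real.sqrt (1 - 2 * u)) (1 / Real.sqrt (1 - 2 * t)) t := by
  have h1 : HasDerivAt (fun u : ℝ => 1 - 2 * u) (-2) t := by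
    simpa using ((hasDerivAt_id t).const_mul (2:ℝ)).const_sub 1
  have h2 : HasDerivAt Real.sqrt (1 / (2 * Real.sqrt (1 - 2 * t))) (1 - 2 * t) :=
    Real.hasDerivAt_sqrt (ne_of_gt ht)
  have h3 := h2.comp t h1
  have hs : Real.sqrt (1 - 2 * t) ≠ 0 := by positivity
  have : 1 / (2 * Real.sqrt (1 - 2 * t)) * (-2) = -(1 / Real.sqrt (1 - 2 * t)) := by
    field_simp
  rw [this] at h3
  have h4 := h3.neg
  rw [neg_neg] at h4
  exact h4

lemma rho_Iic_formula (z : ℝ) (hz0 : 0 ≤ z) (hz : z < 1/2) :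
    (volume.withDensity rdens) (Iic z) = ENNReal.ofReal (1 - Real.sqrt (1 - 2 * z)) := by
  rw [withDensity_apply _ measurableSet_Iic]
  have hsplit : Iic z = Iio 0 ∪ Icc 0 z := by
    rw [Iio_union_Icc_eq_Iic hz0]
  rw [hsplit, lintegral_union measurableSet_Icc (by
    rw [Set.disjoint_left]; intro x hx hx2; exact absurd hx2.1 (not_le.2 hx))]
  have h1 : ∫⁻ t in Iio 0, rdens t = 0 := by
    rw [setLIntegral_congr_fun measurableSet_Iio
      (fun t (ht : t < 0) => rdens_zero (Or.inl (fun hc => absurd hc.1 (not_le.2 ht))))]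
    simp
  have h2 : ∫⁻ t in Icc 0 z, rdens t
      = ∫⁻ t in Icc 0 z, ENNReal.ofReal (1 / Real.sqrt (1 - 2 * t)) := by
    refine setLIntegral_congr_fun measurableSet_Icc (fun t ht => ?_)
    have hm : t ∈ Icc (0:ℝ) (1/2) := ⟨ht.1, le_trans ht.2 hz.le⟩
    rw [rdens, indicator_of_mem hm]
  have hcont : ContinuousOn (fun t => 1 / Real.sqrt (1 - 2 * t)) (Icc 0 z) := by
    refine ContinuousOn.div continuousOn_const
      (Real.continuous_sqrt.comp (by continuity)).continuousOn (fun t ht => ?_)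
    have : 0 < 1 - 2 * t := by nlinarith [ht.2]
    positivity
  have hint : IntegrableOn (fun t => 1 / Real.sqrt (1 - 2 * t)) (Icc 0 z) :=
    hcont.integrableOn_compact isCompact_Icc
  have h3 : ∫⁻ t in Icc 0 z, ENNReal.ofReal (1 / Real.sqrt (1 - 2 * t))
      = ENNReal.ofReal (∫ t in Icc 0 z, 1 / Real.sqrt (1 - 2 * t)) := by
    rw [← ofReal_integral_eq_lintegral_ofReal hint (ae_of_all _ (fun t => by positivity))]
  have h4 : ∫ t in Icc 0 z, 1 / Real.sqrt (1 - 2 * t) = 1 - Real.sqrt (1 - 2 * z) := by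
    rw [integral_Icc_eq_integral_Ioc, ← intervalIntegral.integral_of_le hz0]
    have := intervalIntegral.integral_eq_sub_of_hasDerivAt
      (f := fun u => -Real.sqrt (1 - 2 * u))
      (f' := fun t => 1 / Real.sqrt (1 - 2 * t)) (a := 0) (b := z)
      (fun t ht => by
        rw [uIcc_of_le hz0] at ht
        exact hasDeriv_neg_sqrt (by nlinarith [ht.2]))
      ((hcont.mono (by rw [uIcc_of_le hz0])).intervalIntegrable)
    rw [this]
    have h00 : (1 - 2*(0:ℝ)) = 1 := by norm_num
    show -Real.sqrt (1 - 2*z) - -Real.sqrt (1 - 2*0) = _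
    rw [h00, Real.sqrt_one]
    ring
  rw [h1, h2, h3, h4, zero_add]

lemma rho_Iio_half : (volume.withDensity rdens) (Iio (1/2)) = 1 := by
  set ρ := volume.withDensity rdens
  have hun : Iio (1/2 : ℝ) = ⋃ n : ℕ, Iic (1/2 - 1/(2*((n:ℝ)+1))) := by
    ext x
    simp only [mem_Iio, mem_iUnion, mem_Iic]
    constructor
    · intro hx
      obtain ⟨n, hn⟩ := exists_nat_gt (1 / (2 * (1/2 - x)))
      refine ⟨n, ?_⟩
      have hpos : 0 < 1/2 - x := by linarith
      have hn1 : 1 / (2 * (1/2 - x)) < n + 1 := by linarith [hn]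
      have h2 : 1 / (2 * ((n:ℝ) + 1)) < 1/2 - x := by
        rw [div_lt_iff₀ (by positivity)] at hn1 ⊢
        nlinarith
      linarith
    · rintro ⟨n, hn⟩
      have : 0 < 1/(2*((n:ℝ)+1)) := by positivity
      linarith
  have hmono : Monotone (fun n : ℕ => Iic (1/2 - 1/(2*((n:ℝ)+1)))) := by
    intro m n hmn
    apply Iic_subset_Iic.2
    have : 1/(2*((n:ℝ)+1)) ≤ 1/(2*((m:ℝ)+1)) := by
      apply one_div_le_one_div_of_le (by positivity)
      have : (m:ℝ) ≤ n := Nat.cast_le.2 hmn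
      linarith
    linarith
  have htend : Filter.Tendsto (fun n : ℕ => ρ (Iic (1/2 - 1/(2*((n:ℝ)+1))))) Filter.atTop
      (nhds (ρ (Iio (1/2)))) := by
    rw [hun]
    exact tendsto_measure_iUnion_atTop hmono
  have hval : ∀ n : ℕ, ρ (Iic (1/2 - 1/(2*((n:ℝ)+1)))) = ENNReal.ofReal (1 - Real.sqrt (1/(n+1))) := by
    intro n
    have h0 : (0:ℝ) ≤ 1/2 - 1/(2*(n+1)) := by
      have h1 : 1/(2*((n:ℝ)+1)) ≤ 1/2 := by
        apply one_div_le_one_div_of_le (by norm_num)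
        have : (0:ℝ) ≤ n := Nat.cast_nonneg n
        linarith
      linarith
    have h1 : 1/2 - 1/(2*((n:ℝ)+1)) < 1/2 := by
      have : 0 < 1/(2*((n:ℝ)+1)) := by positivity
      linarith
    rw [rho_Iic_formula _ h0 h1]
    have heq : 1 - 2*(1/2 - 1/(2*((n:ℝ)+1))) = 1/((n:ℝ)+1) := by
      field_simp
      ring
    rw [heq]
  have htend2 : Filter.Tendsto (fun n : ℕ => ρ (Iic (1/2 - 1/(2*((n:ℝ)+1))))) Filter.atTop
      (nhds 1) := by
    simp only [hval]
    have hreal : Filter.Tendsto (fun n : ℕ => 1 - Real.sqrt (1/(n+1))) Filter.atTop (nhds 1) := by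
      have h1 : Filter.Tendsto (fun n : ℕ => 1/((n:ℝ)+1)) Filter.atTop (nhds 0) :=
        tendsto_one_div_add_atTop_nhds_zero_nat
      have h2 := (Real.continuous_sqrt.tendsto 0).comp h1
      rw [Real.sqrt_zero] at h2
      have := h2.const_sub 1
      simpa using this
    have := (ENNReal.continuous_ofReal.tendsto 1).comp hreal
    simpa [Function.comp_def] using this
  have := tendsto_nhds_unique htend htend2
  exact this

lemma rho_Iic (z : ℝ) :
    (volume.withDensity rdens) (Iic z)
      = if z < 0 then 0 else if z < 1/2 then ENNReal.ofReal (1 - Real.sqrt (1 - 2*z)) else 1 := by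
  split_ifs with h1 h2
  · rw [withDensity_apply _ measurableSet_Iic,
      setLIntegral_congr_fun measurableSet_Iic
        (fun t (ht : t ≤ z) => rdens_zero (Or.inl (fun hc => absurd hc.1 (not_le.2 (lt_of_le_of_lt ht h1)))))]
    simp
  · exact rho_Iic_formula z (not_lt.1 h1) h2
  · -- z ≥ 1/2
    have hz : (1/2 : ℝ) ≤ z := not_lt.1 h2
    have hsplit : Iic z = Iio (1/2) ∪ Icc (1/2) z := by
      rw [Iio_union_Icc_eq_Iic hz]
    have hzero : (volume.withDensity rdens) (Icc (1/2) z) = 0 := by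
      rw [withDensity_apply _ measurableSet_Icc]
      have hz0 : ∀ t ∈ Icc (1/2:ℝ) z, rdens t = 0 := by
        intro t ht
        rcases eq_or_lt_of_le (ht.1 : (1/2:ℝ) ≤ t) with h | h
        · exact rdens_zero (Or.inr h.symm)
        · exact rdens_zero (Or.inl (fun hc => absurd hc.2 (not_le.2 h)))
      rw [setLIntegral_congr_fun measurableSet_Icc hz0]
      simp
    rw [hsplit, measure_union (by
      rw [Set.disjoint_left]; intro x hx hx2; exact absurd hx2.1 (not_le.2 hx)) measurableSet_Icc,
      hzero, add_zero, rho_Iio_half]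


lemma map_T_eq (f : ℝ → ℝ) (hfpos : ∀ x, 0 < f x) (hfc : Continuous f)
    (Q : Measure ℝ) [IsProbabilityMeasure Q]
    (hQ : Q = volume.withDensity (fun x => ENNReal.ofReal (f x)))
    (F : ℝ → ℝ) (hF : ∀ x, F x = (Q (Iic x)).toReal) :
    Measure.map (fun x => 2 * F x * (1 - F x)) Q = volume.withDensity rdens := by
  obtain ⟨hmono, hcont, hIoo, hsurj⟩ := cdf_props f hfpos hfc Q hQ F hF
  have hTm : Measurable (fun x => 2 * F x * (1 - F x)) :=
    ((continuous_const.mul hcont).mul (continuous_const.sub hcont)).measurable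
  haveI : IsProbabilityMeasure (Measure.map (fun x => 2 * F x * (1 - F x)) Q) :=
    Measure.isProbabilityMeasure_map hTm.aemeasurable
  refine Measure.ext_of_Iic _ _ (fun z => ?_)
  rw [Measure.map_apply hTm measurableSet_Iic, rho_Iic]
  split_ifs with h1 h2
  · have he : (fun x => 2*F x*(1-F x)) ⁻¹' Iic z = ∅ := by
      ext x
      simp only [mem_preimage, mem_Iic, mem_empty_iff_false, iff_false, not_le]
      obtain ⟨hu0, hu1⟩ := hIoo x
      nlinarith
    rw [he, measure_empty]
  · have hz0 : 0 ≤ z := not_lt.1 h1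
    set s := Real.sqrt (1 - 2*z) with hs
    have hs0 : 0 < s := Real.sqrt_pos.2 (by linarith)
    have hs1 : s ≤ 1 := by
      rw [hs]
      exact Real.sqrt_le_one.mpr (by linarith)
    have hssq : s^2 = 1 - 2*z := Real.sq_sqrt (by linarith)
    have hset : (fun x => 2*F x*(1-F x)) ⁻¹' Iic z
        = {x | F x ≤ (1-s)/2} ∪ {x | (1+s)/2 ≤ F x} := by
      ext x
      obtain ⟨hu0, hu1⟩ := hIoo x
      simp only [mem_preimage, mem_Iic, mem_union, mem_setOf_eq]
      constructor
      · intro h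
        have h2' : 1 - 2*z ≤ (1-2*F x)^2 := by nlinarith
        have h3 : s ≤ |1-2*F x| := by
          rw [hs, ← Real.sqrt_sq_eq_abs]
          exact Real.sqrt_le_sqrt h2'
        rcases le_abs.1 h3 with h4 | h4
        · left; linarith
        · right; linarith
      · intro h
        have h3 : s ≤ |1-2*F x| := by
          rcases h with h | h
          · rw [abs_of_nonneg (by linarith)]; linarith
          · rw [abs_of_nonpos (by linarith)]; linarith
        have h4 : s^2 ≤ (1-2*F x)^2 := by
          have h5 := pow_le_pow_left₀ hs0.le h3 2
          rwa [sq_abs] at h5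
        nlinarith
    rw [hset]
    have hm2 : MeasurableSet {x | (1+s)/2 ≤ F x} :=
      measurableSet_le measurable_const hcont.measurable
    have hdisj : Disjoint {x | F x ≤ (1-s)/2} {x | (1+s)/2 ≤ F x} := by
      rw [Set.disjoint_left]
      intro x hx hx2
      simp only [mem_setOf_eq] at hx hx2
      linarith
    rw [measure_union hdisj hm2]
    rcases eq_or_lt_of_le hs1 with hseq | hslt
    · have he1 : {x | F x ≤ (1-s)/2} = ∅ := by
        ext x
        simp only [mem_setOf_eq, mem_empty_iff_false, iff_false, not_le]
        rw [hseq]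
        norm_num
        exact (hIoo x).1
      have he2 : {x | (1+s)/2 ≤ F x} = ∅ := by
        ext x
        simp only [mem_setOf_eq, mem_empty_iff_false, iff_false, not_le]
        rw [hseq]
        norm_num
        exact (hIoo x).2
      rw [he1, he2, hseq]
      simp
    · have hc1 : (1-s)/2 ∈ Ioo (0:ℝ) 1 := ⟨by linarith, by linarith⟩
      have hc2 : (1+s)/2 ∈ Ioo (0:ℝ) 1 := ⟨by linarith, by linarith⟩
      obtain ⟨hQ1, -⟩ := cdf_level_le f hfpos hfc Q hQ F hF _ hc1
      obtain ⟨-, hQ2⟩ := cdf_level_le f hfpos hfc Q hQ F hF _ hc2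
      rw [hQ1, hQ2, ← ENNReal.ofReal_add (by linarith) (by linarith)]
      congr 1
      ring
  · have hz : (1/2:ℝ) ≤ z := not_lt.1 h2
    have he : (fun x => 2*F x*(1-F x)) ⁻¹' Iic z = univ := by
      ext x
      simp only [mem_preimage, mem_Iic, mem_univ, iff_true]
      obtain ⟨hu0, hu1⟩ := hIoo x
      nlinarith [sq_nonneg (1 - 2*F x)]
    rw [he, measure_univ]

lemma vol_ac_density (f : ℝ → ℝ) (hfpos : ∀ x, 0 < f x) (hfc : Continuous f) :
    (volume : Measure ℝ) ≪ volume.withDensity (fun x => ENNReal.ofReal (f x)) := by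
  refine Measure.AbsolutelyContinuous.mk (fun s hs h0 => ?_)
  rw [withDensity_apply _ hs] at h0
  rw [setLIntegral_eq_zero_iff hs (hfc.measurable.ennreal_ofReal)] at h0
  have h2 := ae_iff.1 h0
  simp only [Pi.zero_apply, Function.comp_apply, ENNReal.ofReal_eq_zero, not_le] at h2
  have hset : {a : ℝ | ¬(a ∈ s → f a ≤ 0)} = s := by
    ext a
    simp only [mem_setOf_eq, _root_.not_imp, not_le]
    exact ⟨fun h => h.1, fun h => ⟨h, hfpos a⟩⟩
  rwa [hset] at h2

lemma one_side (P Q : Measure ℝ) [IsProbabilityMeasure P] [IsProbabilityMeasure Q]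
    (fX fY : ℝ → ℝ) (hfXpos : ∀ x, 0 < fX x) (hfYpos : ∀ x, 0 < fY x)
    (hfXc : Continuous fX) (hfYc : Continuous fY)
    (hP : P = volume.withDensity (fun x => ENNReal.ofReal (fX x)))
    (hQ : Q = volume.withDensity (fun x => ENNReal.ofReal (fY x)))
    (FY : ℝ → ℝ) (hFY : ∀ x, FY x = (Q (Iic x)).toReal) :
    TVD (Measure.map (fun x => 2 * FY x * (1 - FY x)) P)
        (volume.withDensity rdens) ≤ TVD P Q := by
  obtain ⟨hmono, hcont, hIoo, hsurj⟩ := cdf_props fY hfYpos hfYc Q hQ FY hFY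
  have hTm : Measurable (fun x => 2 * FY x * (1 - FY x)) :=
    ((continuous_const.mul hcont).mul (continuous_const.sub hcont)).measurable
  have hPv : P ≪ volume := hP ▸ withDensity_absolutelyContinuous _ _
  have hQv : Q ≪ volume := hQ ▸ withDensity_absolutelyContinuous _ _
  have hmapQ : Measure.map (fun x => 2 * FY x * (1 - FY x)) Q = volume.withDensity rdens :=
    map_T_eq fY hfYpos hfYc Q hQ FY hFY
  have hPQ : P ≪ Q := hPv.trans (vol_ac_density fY hfYpos hfYc |>.trans (by rw [hQ]))
  have hmapP : Measure.map (fun x => 2 * FY x * (1 - FY x)) P ≪ volume := by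
    refine (hPQ.map hTm).trans ?_
    rw [hmapQ]
    exact withDensity_absolutelyContinuous _ _
  have hmapQv : Measure.map (fun x => 2 * FY x * (1 - FY x)) Q ≪ volume := by
    rw [hmapQ]
    exact withDensity_absolutelyContinuous _ _
  calc TVD (Measure.map (fun x => 2 * FY x * (1 - FY x)) P) (volume.withDensity rdens)
      = TVD (Measure.map (fun x => 2 * FY x * (1 - FY x)) P)
          (Measure.map (fun x => 2 * FY x * (1 - FY x)) Q) := by rw [hmapQ]
    _ ≤ TVD P Q := tvd_map_le P Q hPv hQv _ hTm hmapP hmapQv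

/-- Let `P, Q` have everywhere positive continuous densities `fX, fY` and CDFs `FX, FY`.
With `Q_P^{SD}` the law of `2 FY(X) (1 - FY(X))` for `X ~ P`, `P_Q^{SD}` the law of
`2 FX(Y) (1 - FX(Y))` for `Y ~ Q`, and `R` the distribution on `[0, 1/2]` with density
`r(z) = 1 / √(1 - 2 z)`, we have `TVD(Q_P^{SD}, R) ≤ TVD(P, Q)` and
`TVD(P_Q^{SD}, R) ≤ TVD(P, Q)`. -/
theorem sd_induced_tvd_le
    (P Q : Measure ℝ) [IsProbabilityMeasure P] [IsProbabilityMeasure Q]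
    (fX fY : ℝ → ℝ) (hfXpos : ∀ x, 0 < fX x) (hfYpos : ∀ x, 0 < fY x)
    (hfXc : Continuous fX) (hfYc : Continuous fY)
    (hP : P = volume.withDensity (fun x => ENNReal.ofReal (fX x)))
    (hQ : Q = volume.withDensity (fun x => ENNReal.ofReal (fY x)))
    (FX FY : ℝ → ℝ)
    (hFX : ∀ x, FX x = (P (Iic x)).toReal)
    (hFY : ∀ x, FY x = (Q (Iic x)).toReal) :
    TVD (Measure.map (fun x => 2 * FY x * (1 - FY x)) P)
        (volume.withDensity (fun z => ENNReal.ofReal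
          (indicator (Icc (0 : ℝ) (1 / 2)) (fun z => 1 / Real.sqrt (1 - 2 * z)) z)))
      ≤ TVD P Q ∧
    TVD (Measure.map (fun y => 2 * FX y * (1 - FX y)) Q)
        (volume.withDensity (fun z => ENNReal.ofReal
          (indicator (Icc (0 : ℝ) (1 / 2)) (fun z => 1 / Real.sqrt (1 - 2 * z)) z)))
      ≤ TVD P Q := by
  have hr : (fun z => ENNReal.ofReal
      (indicator (Icc (0 : ℝ) (1 / 2)) (fun z => 1 / Real.sqrt (1 - 2 * z)) z)) = rdens := rfl
  rw [hr]
  constructor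
  · exact one_side P Q fX fY hfXpos hfYpos hfXc hfYc hP hQ FY hFY
  · have h := one_side Q P fY fX hfYpos hfXpos hfYc hfXc hQ hP FX hFX
    rw [TVD_comm Q P] at h
    exact h
end

section
/- Let P, Q be probability distributions on ℝ with everywhere positive continuous densities f_X, f_Y and CDFs F_X, F_Y, both symmetric around a common center x*: f_X(x* + t) = f_X(x* − t) and f_Y(x* + t) = f_Y(x* − t) for all t ∈ ℝ. Then TVD(P_Q^{SD}, R) = TVD(Q_P^{SD}, R) = TVD(P, Q), where Q_P^{SD} is the law of 2 F_Y(X)(1 − F_Y(X)) for X ∼ P, P_Q^{SD} is the law of 2 F_X(Y)(1 − F_X(Y)) for Y ∼ Q, and R is the distribution on [0, 1/2] with density r(z) = 1/√(1 − 2z). -/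
open MeasureTheory Set Filter Topology

lemma aux_apply {f : ℝ → ℝ} (hpos : ∀ x, 0 ≤ f x) (hint : Integrable f)
    {s : Set ℝ} (hs : MeasurableSet s) :
    volume.withDensity (fun x => ENNReal.ofReal (f x)) s = ENNReal.ofReal (∫ x in s, f x) := by
  rw [withDensity_apply _ hs,
    ← ofReal_integral_eq_lintegral_ofReal hint.integrableOn
      (ae_of_all _ fun x => hpos x)]

lemma aux_integrable {f : ℝ → ℝ} (hc : Continuous f) (hpos : ∀ x, 0 ≤ f x)
    (h1 : volume.withDensity (fun x => ENNReal.ofReal (f x)) univ = 1) :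
    Integrable f ∧ ∫ x, f x = 1 := by
  have hm : ∫⁻ x, ENNReal.ofReal (f x) = 1 := by
    simpa [withDensity_apply _ MeasurableSet.univ] using h1
  have hi : Integrable f := by
    refine ⟨hc.aestronglyMeasurable, ?_⟩
    rw [hasFiniteIntegral_iff_ofReal (ae_of_all _ hpos), hm]
    exact ENNReal.one_lt_top
  refine ⟨hi, ?_⟩
  have := ofReal_integral_eq_lintegral_ofReal hi (ae_of_all _ hpos)
  rw [hm] at this
  have h0 : 0 ≤ ∫ x, f x := integral_nonneg hpos
  have := congrArg ENNReal.toReal this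
  simpa [ENNReal.toReal_ofReal h0] using this

lemma aux_reflect {f : ℝ → ℝ} {c xs : ℝ} (hsym : ∀ t : ℝ, f (xs + t) = f (xs - t)) :
    ∫ x in Iic (2 * xs - c), f x = ∫ x in Ici c, f x := by
  have himg : (fun x : ℝ => 2 * xs - x) '' Ici c = Iic (2 * xs - c) := by
    ext y
    constructor
    · rintro ⟨x, hx, rfl⟩
      simp only [mem_Iic]
      linarith [mem_Ici.mp hx]
    · intro hy
      exact ⟨2 * xs - y, by simp only [mem_Ici]; linarith [mem_Iic.mp hy], by ring⟩
  have hderiv : ∀ x ∈ Ici c, HasDerivWithinAt (fun x : ℝ => 2 * xs - x) ((fun _ : ℝ => (-1 : ℝ)) x) (Ici c) x := by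
    intro x _
    simpa using ((hasDerivAt_id' x).const_sub (2 * xs)).hasDerivWithinAt
  have hinj : InjOn (fun x : ℝ => 2 * xs - x) (Ici c) := fun a _ b _ h => by
    dsimp at h; linarith
  have := integral_image_eq_integral_abs_deriv_smul measurableSet_Ici hderiv hinj f
  rw [himg] at this
  rw [this]
  refine setIntegral_congr_fun measurableSet_Ici fun x _ => ?_
  have := hsym (x - xs)
  simp only [abs_neg, abs_one, one_smul]
  rw [show xs + (x - xs) = x by ring, show xs - (x - xs) = 2 * xs - x by ring] at this
  rw [← this]


lemma aux_hasDerivAt {f : ℝ → ℝ} (hc : Continuous f) (hint : Integrable f) (x : ℝ) :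
    HasDerivAt (fun y => ∫ t in Iic y, f t) (f x) x := by
  have key : ∀ y : ℝ, ∫ t in Iic y, f t = (∫ t in Iic (0:ℝ), f t) + ∫ t in (0:ℝ)..y, f t := by
    intro y
    rw [← intervalIntegral.integral_Iic_sub_Iic hint.integrableOn hint.integrableOn]
    ring
  have h1 : HasDerivAt (fun y => ∫ t in (0:ℝ)..y, f t) (f x) x :=
    intervalIntegral.integral_hasDerivAt_right (hint.intervalIntegrable)
      hc.aestronglyMeasurable.stronglyMeasurableAtFilter hc.continuousAt
  have := (h1.const_add (∫ t in Iic (0:ℝ), f t))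
  refine HasDerivAt.congr_of_eventuallyEq this ?_
  filter_upwards with y using (key y)

lemma aux_strictMono {f : ℝ → ℝ} (hpos : ∀ x, 0 < f x) (hint : Integrable f) :
    StrictMono (fun y => ∫ t in Iic y, f t) := by
  intro a b hab
  have h := intervalIntegral.intervalIntegral_pos_of_pos (hint.intervalIntegrable) hpos hab
  have := intervalIntegral.integral_Iic_sub_Iic (hint.integrableOn (s := Iic a)) (hint.integrableOn (s := Iic b))
  dsimp only
  linarith

lemma aux_lt_one {f : ℝ → ℝ} (hpos : ∀ x, 0 < f x) (hint : Integrable f)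
    (h1 : ∫ x, f x = 1) (x : ℝ) : (∫ t in Iic x, f t) < 1 := by
  have hsplit : (∫ t in Iic x, f t) + (∫ t in Ioi x, f t) = ∫ t, f t :=
    intervalIntegral.integral_Iic_add_Ioi hint.integrableOn hint.integrableOn
  have h2 : 0 < ∫ t in Ioi x, f t := by
    have hgt : (∫ t in Ioi x, f t) ≥ ∫ t in Ioc x (x+1), f t := by
      apply setIntegral_mono_set hint.integrableOn (ae_of_all _ fun t => (hpos t).le)
      exact HasSubset.Subset.eventuallyLE Ioc_subset_Ioi_self
    have : 0 < ∫ t in Ioc x (x+1), f t := by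
      have := intervalIntegral.intervalIntegral_pos_of_pos (a:=x) (b:=x+1) hint.intervalIntegrable hpos (by linarith)
      rwa [intervalIntegral.integral_of_le (by linarith : x ≤ x+1)] at this
    linarith
  linarith [h1 ▸ hsplit]

lemma aux_pos {f : ℝ → ℝ} (hpos : ∀ x, 0 < f x) (hint : Integrable f) (x : ℝ) :
    0 < ∫ t in Iic x, f t := by
  have hgt : (∫ t in Iic x, f t) ≥ ∫ t in Ioc (x-1) x, f t := by
    apply setIntegral_mono_set hint.integrableOn (ae_of_all _ fun t => (hpos t).le)
    exact HasSubset.Subset.eventuallyLE Ioc_subset_Iic_self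
  have : 0 < ∫ t in Ioc (x-1) x, f t := by
    have := intervalIntegral.intervalIntegral_pos_of_pos (a:=x-1) (b:=x) hint.intervalIntegrable hpos (by linarith)
    rwa [intervalIntegral.integral_of_le (by linarith : x-1 ≤ x)] at this
  linarith

lemma aux_half {f : ℝ → ℝ} {xs : ℝ} (hsym : ∀ t : ℝ, f (xs + t) = f (xs - t))
    (hint : Integrable f) (h1 : ∫ x, f x = 1) :
    (∫ t in Iic xs, f t) = 1/2 := by
  have hrefl : ∫ x in Iic (2 * xs - xs), f x = ∫ x in Ici xs, f x := by
    have himg : (fun x : ℝ => 2 * xs - x) '' Ici xs = Iic (2 * xs - xs) := by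
      ext y; constructor
      · rintro ⟨x, hx, rfl⟩; simp only [mem_Iic]; linarith [mem_Ici.mp hx]
      · intro hy; exact ⟨2 * xs - y, by simp only [mem_Ici]; linarith [mem_Iic.mp hy], by ring⟩
    have hderiv : ∀ x ∈ Ici xs, HasDerivWithinAt (fun x : ℝ => 2 * xs - x) ((fun _ : ℝ => (-1 : ℝ)) x) (Ici xs) x := by
      intro x _
      simpa using ((hasDerivAt_id' x).const_sub (2 * xs)).hasDerivWithinAt
    have hinj : InjOn (fun x : ℝ => 2 * xs - x) (Ici xs) := fun a _ b _ h => by dsimp at h; linarith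
    have := integral_image_eq_integral_abs_deriv_smul measurableSet_Ici hderiv hinj f
    rw [himg] at this
    rw [this]
    refine setIntegral_congr_fun measurableSet_Ici fun x _ => ?_
    have := hsym (x - xs)
    rw [show xs + (x - xs) = x by ring, show xs - (x - xs) = 2 * xs - x by ring] at this
    simpa using this.symm
  have h2 : (∫ t in Iic xs, f t) = ∫ t in Ici xs, f t := by
    simpa [show 2 * xs - xs = xs by ring] using hrefl
  have h3 : (∫ t in Ici xs, f t) = ∫ t in Ioi xs, f t := integral_Ici_eq_integral_Ioi
  have hsplit : (∫ t in Iic xs, f t) + (∫ t in Ioi xs, f t) = ∫ t, f t :=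
    intervalIntegral.integral_Iic_add_Ioi hint.integrableOn hint.integrableOn
  rw [h1] at hsplit
  linarith [h2.trans h3]

lemma aux_Ici {f : ℝ → ℝ} (hint : Integrable f) (h1 : ∫ x, f x = 1) (c : ℝ) :
    ∫ t in Ici c, f t = 1 - ∫ t in Iic c, f t := by
  have h3 : (∫ t in Ici c, f t) = ∫ t in Ioi c, f t := integral_Ici_eq_integral_Ioi
  have hsplit : (∫ t in Iic c, f t) + (∫ t in Ioi c, f t) = ∫ t, f t :=
    intervalIntegral.integral_Iic_add_Ioi hint.integrableOn hint.integrableOn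
  rw [h1] at hsplit; linarith

lemma aux_tendsto {f : ℝ → ℝ} (hpos : ∀ x, 0 ≤ f x) (hint : Integrable f) (h1 : ∫ x, f x = 1) :
    Tendsto (fun x => ∫ t in Iic x, f t) atTop (𝓝 1) := by
  set μ := volume.withDensity (fun x => ENNReal.ofReal (f x)) with hμ
  have happly : ∀ s : Set ℝ, MeasurableSet s → μ s = ENNReal.ofReal (∫ x in s, f x) := by
    intro s hs
    rw [hμ, withDensity_apply _ hs,
      ← ofReal_integral_eq_lintegral_ofReal hint.integrableOn (ae_of_all _ hpos)]
  have huniv : μ univ = 1 := by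
    rw [happly univ MeasurableSet.univ]
    simp [h1]
  have ht := tendsto_measure_Iic_atTop μ
  rw [huniv] at ht
  have ht2 : Tendsto (fun x => (μ (Iic x)).toReal) atTop (𝓝 (1 : ENNReal).toReal) :=
    (ENNReal.tendsto_toReal (by simp)).comp ht
  simp only [ENNReal.toReal_one] at ht2
  refine ht2.congr fun x => ?_
  rw [happly _ measurableSet_Iic, ENNReal.toReal_ofReal (setIntegral_nonneg measurableSet_Iic fun t _ => hpos t)]
set_option maxHeartbeats 1000000 in
theorem key (fX fY : ℝ → ℝ) (hfXpos : ∀ x, 0 < fX x) (hfYpos : ∀ x, 0 < fY x)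
    (hfXc : Continuous fX) (hfYc : Continuous fY)
    (hfXint : Integrable fX) (hfYint : Integrable fY)
    (hfX1 : ∫ x, fX x = 1) (hfY1 : ∫ x, fY x = 1)
    (xstar : ℝ) (hsymX : ∀ t, fX (xstar + t) = fX (xstar - t))
    (hsymY : ∀ t, fY (xstar + t) = fY (xstar - t)) :
    TVD (Measure.map (fun x => 2 * (∫ t in Iic x, fY t) * (1 - (∫ t in Iic x, fY t)))
          (volume.withDensity (fun x => ENNReal.ofReal (fX x))))
        (volume.withDensity (fun z => ENNReal.ofReal
          (indicator (Icc (0 : ℝ) (1 / 2)) (fun z => 1 / Real.sqrt (1 - 2 * z)) z)))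
      = (1/2) * ∫ x, |fX x - fY x| := by
  set P := volume.withDensity (fun x => ENNReal.ofReal (fX x)) with hPdef
  set F : ℝ → ℝ := fun x => ∫ t in Iic x, fY t with hFdef
  set FX' : ℝ → ℝ := fun x => ∫ t in Iic x, fX t with hFXdef
  set g : ℝ → ℝ := fun x => 2 * F x * (1 - F x) with hgdef
  set gd : ℝ → ℝ := fun x => 2 * fY x * (1 - 2 * F x) with hgddef
  -- basic facts about F
  have hFderiv : ∀ x, HasDerivAt F (fY x) x := fun x => aux_hasDerivAt hfYc hfYint x
  have hFc : Continuous F := continuous_iff_continuousAt.2 fun x => (hFderiv x).continuousAt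
  have hFXc : Continuous FX' := continuous_iff_continuousAt.2
    fun x => (aux_hasDerivAt hfXc hfXint x).continuousAt
  have hFmono : StrictMono F := aux_strictMono hfYpos hfYint
  have hFpos : ∀ x, 0 < F x := aux_pos hfYpos hfYint
  have hFlt1 : ∀ x, F x < 1 := aux_lt_one hfYpos hfYint hfY1
  have hFhalf : F xstar = 1/2 := aux_half hsymY hfYint hfY1
  have hFXhalf : FX' xstar = 1/2 := aux_half hsymX hfXint hfX1
  have hFgt : ∀ x, xstar < x → 1/2 < F x := fun x hx => hFhalf ▸ hFmono hx
  have hFtop : Tendsto F atTop (𝓝 1) := aux_tendsto (fun x => (hfYpos x).le) hfYint hfY1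
  -- basic facts about g
  have hgc : Continuous g := (continuous_const.mul hFc).mul (continuous_const.sub hFc)
  have hgderiv : ∀ x, HasDerivAt g (gd x) x := by
    intro x
    have h := ((hFderiv x).const_mul (2:ℝ)).mul ((hasDerivAt_const x (1:ℝ)).sub (hFderiv x))
    have h' : HasDerivAt g (2 * fY x * (1 - F x) + 2 * F x * (0 - fY x)) x := h
    convert h' using 1
    simp only [hgddef]
    ring
  have hgpos : ∀ x, 0 < g x := by
    intro x
    have h1 := hFpos x; have h2 := hFlt1 x
    simp only [hgdef]
    nlinarith
  have hghalf : ∀ x, g x ≤ 1/2 := by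
    intro x
    simp only [hgdef]
    nlinarith [sq_nonneg (2 * F x - 1)]
  have hgxstar : g xstar = 1/2 := by simp only [hgdef, hFhalf]; norm_num
  have hganti : StrictAntiOn g (Ici xstar) := by
    intro x hx y hy hxy
    have h1 : F x < F y := hFmono hxy
    have h2 : 1/2 ≤ F x := by
      rcases eq_or_lt_of_le (mem_Ici.1 hx) with h | h
      · rw [← h, hFhalf]
      · exact (hFgt x h).le
    simp only [hgdef]
    nlinarith
  have hgtop : Tendsto g atTop (𝓝 0) := by
    have h := (hFtop.const_mul (2:ℝ)).mul ((tendsto_const_nhds (x := (1:ℝ))).sub hFtop)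
    simpa using h
  have hgsymm : ∀ x : ℝ, g x = g (2 * xstar - x) := by
    intro x
    have hrefl : F (xstar - (x - xstar)) = 1 - F (xstar + (x - xstar)) := by
      have h1 : (2 * xstar - (xstar + (x - xstar))) = xstar - (x - xstar) := by ring
      have h2 := aux_reflect (c := xstar + (x - xstar)) hsymY
      rw [h1] at h2
      simp only [hFdef]
      rw [h2, aux_Ici hfYint hfY1]
    rw [show xstar + (x - xstar) = x by ring, show xstar - (x - xstar) = 2*xstar - x by ring] at hrefl
    simp only [hgdef]
    rw [hrefl]; ring
  -- existence of inverse branch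
  have hexu : ∀ z ∈ Ioo (0:ℝ) (1/2), ∃ x, xstar < x ∧ g x = z := by
    intro z hz
    obtain ⟨c, hc1, hc2⟩ : ∃ c, g c < z ∧ xstar ≤ c :=
      ((hgtop.eventually (gt_mem_nhds hz.1)).and (eventually_ge_atTop xstar)).exists
    have hIcc := intermediate_value_Icc' hc2 hgc.continuousOn
    have hzmem : z ∈ Icc (g c) (g xstar) := ⟨hc1.le, by rw [hgxstar]; exact hz.2.le⟩
    obtain ⟨x, hxmem, hgx⟩ := hIcc hzmem
    refine ⟨x, lt_of_le_of_ne hxmem.1 fun he => ?_, hgx⟩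
    rw [← he] at hgx
    rw [hgxstar] at hgx
    exact absurd hgx (ne_of_gt hz.2)
  obtain ⟨B, hB⟩ : ∃ B : ℝ → ℝ, ∀ z ∈ Ioo (0:ℝ) (1/2), xstar < B z ∧ g (B z) = z := by
    choose bfun hb1 hb2 using hexu
    exact ⟨fun z => if hz : z ∈ Ioo (0:ℝ) (1/2) then bfun z hz else xstar,
      fun z hz => by simp only [dif_pos hz]; exact ⟨hb1 z hz, hb2 z hz⟩⟩
  have hinj : InjOn g (Ici xstar) := hganti.injOn
  have hgmem : ∀ x, xstar < x → g x ∈ Ioo (0:ℝ) (1/2) := by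
    intro x hx
    refine ⟨hgpos x, ?_⟩
    have := hganti self_mem_Ici (mem_Ici.2 hx.le) hx
    rwa [hgxstar] at this
  have hBg : ∀ x, xstar < x → B (g x) = x := fun x hx =>
    hinj (mem_Ici.2 (hB _ (hgmem x hx)).1.le) (mem_Ici.2 hx.le) (hB _ (hgmem x hx)).2
  have hsqrt : ∀ x, xstar < x → Real.sqrt (1 - 2 * g x) = 2 * F x - 1 := by
    intro x hx
    have h1 : (1 : ℝ) - 2 * g x = (2 * F x - 1)^2 := by simp only [hgdef]; ring
    rw [h1, Real.sqrt_sq (by linarith [hFgt x hx])]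
  -- the density of the pushforward
  set H : ℝ → ℝ := fun z => fX (B z) / (fY (B z) * Real.sqrt (1 - 2*z)) with hHdef
  set hreal : ℝ → ℝ := indicator (Ioo (0:ℝ) (1/2)) H with hhrdef
  set ν := volume.withDensity (fun z => ENNReal.ofReal (hreal z)) with hνdef
  have hHnonneg : ∀ z, 0 ≤ hreal z := by
    intro z
    simp only [hhrdef]
    apply indicator_nonneg
    intro w _
    have := (hfXpos (B w)).le
    have := (hfYpos (B w)).le
    have := Real.sqrt_nonneg (1 - 2*w)
    positivity
  have hBanti : AntitoneOn B (Ioo (0:ℝ) (1/2)) := by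
    intro z hz z' hz' hle
    by_contra hcon
    push_neg at hcon
    have h5 := hganti (mem_Ici.2 (hB z hz).1.le) (mem_Ici.2 (hB z' hz').1.le) hcon
    rw [(hB z hz).2, (hB z' hz').2] at h5
    linarith
  have hhae : AEMeasurable hreal volume := by
    rw [hhrdef]
    apply (aemeasurable_indicator_iff measurableSet_Ioo).2
    have hBae := aemeasurable_restrict_of_antitoneOn (μ := volume) measurableSet_Ioo hBanti
    exact (hfXc.measurable.comp_aemeasurable hBae).div
      ((hfYc.measurable.comp_aemeasurable hBae).mul
        ((Real.continuous_sqrt.comp (continuous_const.sub (continuous_const.mul continuous_id))).aemeasurable))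
  -- change of variables facts
  have hsub : ∀ z ∈ Ioo (0:ℝ) (1/2), Ici (B z) ⊆ Ici xstar :=
    fun z hz x hx => mem_Ici.2 (le_trans (hB z hz).1.le hx)
  have himg : ∀ z ∈ Ioo (0:ℝ) (1/2), g '' Ici (B z) = Ioc 0 z := by
    intro z hz
    obtain ⟨hb1, hb2⟩ := hB z hz
    ext y
    simp only [mem_image, mem_Ioc]
    constructor
    · rintro ⟨x, hx, rfl⟩
      have hxgt : xstar < x := lt_of_lt_of_le hb1 hx
      refine ⟨hgpos x, ?_⟩
      rcases eq_or_lt_of_le (mem_Ici.1 hx) with h | h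
      · rw [← h, hb2]
      · have h5 := hganti (mem_Ici.2 hb1.le) (mem_Ici.2 hxgt.le) h
        rw [hb2] at h5
        exact h5.le
    · rintro ⟨hy1, hy2⟩
      obtain ⟨c, hc1, hc2⟩ : ∃ c, g c < y ∧ B z ≤ c :=
        ((hgtop.eventually (gt_mem_nhds hy1)).and (eventually_ge_atTop (B z))).exists
      obtain ⟨x, hxmem, hgx⟩ := intermediate_value_Icc' hc2 hgc.continuousOn
        ⟨hc1.le, by rw [hb2]; exact hy2⟩
      exact ⟨x, hxmem.1, hgx⟩
  have hpt : ∀ z ∈ Ioo (0:ℝ) (1/2), ∀ x ∈ Ici (B z), |gd x| • hreal (g x) = 2 * fX x := by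
    intro z hz x hx
    have hxgt : xstar < x := lt_of_lt_of_le (hB z hz).1 hx
    have hFgtx := hFgt x hxgt
    have hfy := hfYpos x
    have hr1 : hreal (g x) = H (g x) := by
      simp only [hhrdef]
      exact indicator_of_mem (hgmem x hxgt) H
    have hHval : H (g x) = fX x / (fY x * (2 * F x - 1)) := by
      simp only [hHdef]
      rw [hBg x hxgt, hsqrt x hxgt]
    have habs : |gd x| = 2 * fY x * (2 * F x - 1) := by
      rw [abs_of_nonpos (by simp only [hgddef]; nlinarith)]
      simp only [hgddef]; ring
    rw [hr1, hHval, habs, smul_eq_mul]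
    have h1 : fY x ≠ 0 := (hfYpos x).ne'
    have h2 : (2 * F x - 1) ≠ 0 := by linarith
    field_simp
  have hint_Ioc : ∀ z ∈ Ioo (0:ℝ) (1/2), IntegrableOn hreal (Ioc 0 z) := by
    intro z hz
    have h2 : IntegrableOn (fun x => |gd x| • hreal (g x)) (Ici (B z)) :=
      ((hfXint.const_mul 2).integrableOn).congr_fun
        (fun x hx => (hpt z hz x hx).symm) measurableSet_Ici
    rw [← himg z hz]
    exact (integrableOn_image_iff_integrableOn_abs_deriv_smul measurableSet_Ici
      (fun x _ => (hgderiv x).hasDerivWithinAt) (hinj.mono (hsub z hz)) hreal).2 h2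
  have hIoc_val : ∀ z ∈ Ioo (0:ℝ) (1/2), ∫ w in Ioc 0 z, hreal w = 2 * (1 - FX' (B z)) := by
    intro z hz
    rw [← himg z hz, integral_image_eq_integral_abs_deriv_smul measurableSet_Ici
      (fun x _ => (hgderiv x).hasDerivWithinAt) (hinj.mono (hsub z hz)) hreal,
      setIntegral_congr_fun measurableSet_Ici (hpt z hz), integral_const_mul,
      aux_Ici hfXint hfX1]
  have hν_Ioc : ∀ z ∈ Ioo (0:ℝ) (1/2), ν (Ioc 0 z) = ENNReal.ofReal (2 * (1 - FX' (B z))) := by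
    intro z hz
    rw [hνdef, withDensity_apply _ measurableSet_Ioc,
      ← ofReal_integral_eq_lintegral_ofReal (hint_Ioc z hz) (ae_of_all _ fun w => hHnonneg w),
      hIoc_val z hz]
  have hν_null : ∀ s : Set ℝ, MeasurableSet s → (∀ w ∈ s, w ∉ Ioo (0:ℝ) (1/2)) → ν s = 0 := by
    intro s hs hd
    rw [hνdef, withDensity_apply _ hs]
    have hz : ∀ᵐ w ∂volume, w ∈ s → ENNReal.ofReal (hreal w) = (fun _ => (0:ENNReal)) w := by
      refine ae_of_all _ fun w hw => ?_
      simp only [hhrdef, indicator_of_notMem (hd w hw)]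
      simp
    rw [setLIntegral_congr_fun_ae hs hz, lintegral_zero]
  -- total mass of the candidate density
  set zseq : ℕ → ℝ := fun n => g (xstar + 1/(n+1)) with hzdef
  have hpos' : ∀ n : ℕ, (0:ℝ) < 1/(n+1) := fun n => by positivity
  have hzmem : ∀ n, zseq n ∈ Ioo (0:ℝ) (1/2) := fun n => hgmem _ (by linarith [hpos' n])
  have hBz : ∀ n, B (zseq n) = xstar + 1/(n+1) := fun n => hBg _ (by linarith [hpos' n])
  have hzmono : Monotone (fun n => Ioc (0:ℝ) (zseq n)) := by
    intro n m hnm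
    apply Ioc_subset_Ioc_right
    rcases eq_or_lt_of_le hnm with h | h
    · rw [h]
    · have hc : ((n:ℝ)+1) < ((m:ℝ)+1) := by exact_mod_cast Nat.succ_lt_succ h
      have harg : xstar + 1/((m:ℝ)+1) < xstar + 1/((n:ℝ)+1) := by
        have := one_div_lt_one_div_of_lt (by positivity : (0:ℝ) < (n:ℝ)+1) hc
        linarith
      have h5 := hganti (mem_Ici.2 (by linarith [hpos' m] : xstar ≤ xstar + 1/((m:ℝ)+1)))
        (mem_Ici.2 (by linarith [hpos' n] : xstar ≤ xstar + 1/((n:ℝ)+1))) harg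
      simp only [hzdef]
      exact h5.le
  have hzUnion : ⋃ n, Ioc (0:ℝ) (zseq n) = Ioo (0:ℝ) (1/2) := by
    apply Subset.antisymm
    · refine iUnion_subset fun n y hy => ?_
      exact ⟨hy.1, lt_of_le_of_lt hy.2 (hzmem n).2⟩
    · intro y hy
      have htend : Tendsto zseq atTop (𝓝 (1/2)) := by
        have h1 : Tendsto (fun n : ℕ => xstar + 1/((n:ℝ)+1)) atTop (𝓝 (xstar + 0)) :=
          tendsto_const_nhds.add tendsto_one_div_add_atTop_nhds_zero_nat
        rw [add_zero] at h1
        have h2 := (hgc.continuousAt (x := xstar)).tendsto.comp h1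
        rwa [hgxstar] at h2
      obtain ⟨n, hn⟩ := (htend.eventually (eventually_gt_nhds hy.2)).exists
      exact mem_iUnion.2 ⟨n, hy.1, hn.le⟩
  have hν_Ioo : ν (Ioo (0:ℝ) (1/2)) = 1 := by
    have hlim := tendsto_measure_iUnion_atTop (μ := ν) hzmono
    rw [hzUnion] at hlim
    have hvals : Tendsto (fun n => ν (Ioc (0:ℝ) (zseq n))) atTop (𝓝 1) := by
      have heq : ∀ n : ℕ, ν (Ioc (0:ℝ) (zseq n))
          = ENNReal.ofReal (2 * (1 - FX' (xstar + 1/((n:ℝ)+1)))) := fun n => by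
        rw [hν_Ioc _ (hzmem n), hBz n]
      have h1 : Tendsto (fun n : ℕ => xstar + 1/((n:ℝ)+1)) atTop (𝓝 (xstar + 0)) :=
        tendsto_const_nhds.add tendsto_one_div_add_atTop_nhds_zero_nat
      rw [add_zero] at h1
      have h2 : Tendsto (fun n : ℕ => 2 * (1 - FX' (xstar + 1/((n:ℝ)+1)))) atTop
          (𝓝 (2 * (1 - FX' xstar))) :=
        (((hFXc.continuousAt.tendsto.comp h1).const_sub 1).const_mul 2)
      have h25 : (2:ℝ) * (1 - FX' xstar) = 1 := by rw [hFXhalf]; norm_num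
      rw [h25] at h2
      have h3 := (ENNReal.continuous_ofReal.tendsto 1).comp h2
      rw [ENNReal.ofReal_one] at h3
      refine h3.congr fun n => ?_
      rw [heq n]
      rfl
    exact tendsto_nhds_unique hlim hvals
  -- instances and measure identification
  have hP_apply : ∀ s : Set ℝ, MeasurableSet s → P s = ENNReal.ofReal (∫ x in s, fX x) :=
    fun s hs => aux_apply (fun x => (hfXpos x).le) hfXint hs
  haveI hPprob : IsProbabilityMeasure P := by
    constructor
    rw [hP_apply univ MeasurableSet.univ, Measure.restrict_univ, hfX1, ENNReal.ofReal_one]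
  haveI hνfin : IsFiniteMeasure ν := by
    constructor
    have hcompl : ν (Ioo (0:ℝ) (1/2))ᶜ = 0 := hν_null _ measurableSet_Ioo.compl fun w hw => hw
    have h6 := measure_add_measure_compl (μ := ν) (measurableSet_Ioo (a := (0:ℝ)) (b := 1/2))
    rw [hν_Ioo, hcompl, add_zero] at h6
    rw [← h6]
    exact ENNReal.one_lt_top
  haveI := Measure.isProbabilityMeasure_map (μ := P) (f := g) hgc.measurable.aemeasurable
  have hmap_eq : Measure.map g P = ν := by
    refine Measure.ext_of_Iic _ _ fun z => ?_
    rw [Measure.map_apply hgc.measurable measurableSet_Iic]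
    rcases le_or_gt z 0 with hz | hz
    · have hpre : g ⁻¹' Iic z = ∅ := by
        ext x
        simp only [mem_preimage, mem_Iic, mem_empty_iff_false, iff_false, not_le]
        linarith [hgpos x]
      rw [hpre, measure_empty]
      symm
      refine hν_null _ measurableSet_Iic fun w hw hmem => ?_
      have : (0:ℝ) < w := hmem.1
      have : w ≤ z := hw
      linarith
    rcases lt_or_ge z (1/2) with hz2 | hz2
    · have hzIoo : z ∈ Ioo (0:ℝ) (1/2) := ⟨hz, hz2⟩
      obtain ⟨hb1, hb2⟩ := hB z hzIoo
      have hpre : g ⁻¹' Iic z = Iic (2*xstar - B z) ∪ Ici (B z) := by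
        ext x
        simp only [mem_preimage, mem_Iic, mem_union, mem_Ici]
        constructor
        · intro hgx
          rcases le_or_gt x xstar with hxle | hxgt
          · left
            by_contra hcon
            push_neg at hcon
            have hm1 : xstar ≤ 2*xstar - x := by linarith
            have h5 := hganti (mem_Ici.2 hm1) (mem_Ici.2 hb1.le) (by linarith : 2*xstar - x < B z)
            rw [hb2, ← hgsymm x] at h5
            linarith
          · right
            by_contra hcon
            push_neg at hcon
            have h5 := hganti (mem_Ici.2 hxgt.le) (mem_Ici.2 hb1.le) hcon
            rw [hb2] at h5
            linarith
        · intro h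
          rcases h with h | h
          · have hge : B z ≤ 2*xstar - x := by linarith
            rw [hgsymm x]
            rcases eq_or_lt_of_le hge with he | hlt
            · rw [← he, hb2]
            · have h5 := hganti (mem_Ici.2 hb1.le) (mem_Ici.2 (le_trans hb1.le hge)) hlt
              rw [hb2] at h5
              linarith
          · rcases eq_or_lt_of_le h with he | hlt
            · rw [← he, hb2]
            · have h5 := hganti (mem_Ici.2 hb1.le) (mem_Ici.2 (lt_of_lt_of_le hb1 h).le) hlt
              rw [hb2] at h5
              linarith
      rw [hpre]
      have hdisj : Disjoint (Iic (2*xstar - B z)) (Ici (B z)) :=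
        Iic_disjoint_Ici.2 (not_le.2 (by linarith))
      rw [measure_union hdisj measurableSet_Ici, hP_apply _ measurableSet_Iic,
        hP_apply _ measurableSet_Ici]
      have hreflX : ∫ x in Iic (2*xstar - B z), fX x = ∫ x in Ici (B z), fX x :=
        aux_reflect hsymX
      have hIci : ∫ x in Ici (B z), fX x = 1 - FX' (B z) := aux_Ici hfXint hfX1 (B z)
      have hnn : (0:ℝ) ≤ 1 - FX' (B z) := by
        rw [← hIci]
        exact setIntegral_nonneg measurableSet_Ici fun t _ => (hfXpos t).le
      rw [hreflX, hIci, ← ENNReal.ofReal_add hnn hnn]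
      have hsplit : Iic z = Ioc 0 z ∪ Iic 0 := by
        ext w
        simp only [mem_Iic, mem_union, mem_Ioc]
        constructor
        · intro hw
          by_cases h0 : 0 < w
          · exact Or.inl ⟨h0, hw⟩
          · exact Or.inr (le_of_not_gt h0)
        · rintro (⟨h1, h2⟩ | h1)
          · exact h2
          · linarith
      have hdisj2 : Disjoint (Ioc (0:ℝ) z) (Iic 0) := by
        rw [disjoint_left]
        rintro w ⟨h1, _⟩ h2
        exact absurd h2 (not_le.2 h1)
      rw [hsplit, measure_union hdisj2 measurableSet_Iic, hν_Ioc z hzIoo,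
        hν_null (Iic 0) measurableSet_Iic (fun w hw hmem => absurd hmem.1 (not_lt.2 hw)),
        add_zero]
      congr 1
      ring
    · have hpre : g ⁻¹' Iic z = univ := eq_univ_of_forall fun x => le_trans (hghalf x) hz2
      rw [hpre, measure_univ]
      have hsub2 : Ioo (0:ℝ) (1/2) ⊆ Iic z := fun w hw => le_trans hw.2.le hz2
      rw [← union_diff_cancel hsub2,
        measure_union disjoint_sdiff_right (measurableSet_Iic.diff measurableSet_Ioo), hν_Ioo,
        hν_null _ (measurableSet_Iic.diff measurableSet_Ioo) (fun w hw => hw.2), add_zero]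
  -- now compute the TVD
  set rreal : ℝ → ℝ := indicator (Icc (0:ℝ) (1/2)) (fun z => 1 / Real.sqrt (1 - 2*z)) with hrdef
  have hrmeas : Measurable fun z => ENNReal.ofReal (rreal z) := by
    apply ENNReal.measurable_ofReal.comp
    apply Measurable.indicator _ measurableSet_Icc
    exact measurable_const.div
      (Real.continuous_sqrt.comp (continuous_const.sub (continuous_const.mul continuous_id))).measurable
  have hrnonneg : ∀ z, 0 ≤ rreal z := fun z =>
    indicator_nonneg (fun w _ => by positivity) z
  have hrn1 : (Measure.map g P).rnDeriv volume =ᵐ[volume] fun z => ENNReal.ofReal (hreal z) := by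
    rw [hmap_eq, hνdef]
    exact Measure.rnDeriv_withDensity₀ volume (ENNReal.measurable_ofReal.comp_aemeasurable hhae)
  have hrn2 : (volume.withDensity fun z => ENNReal.ofReal (rreal z)).rnDeriv volume
      =ᵐ[volume] fun z => ENNReal.ofReal (rreal z) :=
    Measure.rnDeriv_withDensity volume hrmeas
  simp only [TVD]
  have hcong : ∫ z, |((Measure.map g P).rnDeriv volume z).toReal -
      ((volume.withDensity fun z => ENNReal.ofReal (rreal z)).rnDeriv volume z).toReal|
      = ∫ z, |hreal z - rreal z| := by
    apply integral_congr_ae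
    filter_upwards [hrn1, hrn2] with z h1 h2
    rw [h1, h2, ENNReal.toReal_ofReal (hHnonneg z), ENNReal.toReal_ofReal (hrnonneg z)]
  rw [hcong]
  have hae2 : (fun z => |hreal z - rreal z|)
      =ᵐ[volume] indicator (Ioo (0:ℝ) (1/2)) (fun z => |H z - 1 / Real.sqrt (1 - 2*z)|) := by
    have hfin : volume ({0, 1/2} : Set ℝ) = 0 :=
      ((Set.finite_singleton ((1:ℝ)/2)).insert 0).measure_zero volume
    filter_upwards [compl_mem_ae_iff.2 hfin] with z hz
    by_cases hmem : z ∈ Ioo (0:ℝ) (1/2)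
    · have hIcc : z ∈ Icc (0:ℝ) (1/2) := Ioo_subset_Icc_self hmem
      rw [indicator_of_mem hmem]
      simp only [hhrdef, hrdef, indicator_of_mem hmem, indicator_of_mem hIcc]
    · rw [indicator_of_notMem hmem]
      have hIcc : z ∉ Icc (0:ℝ) (1/2) := by
        intro hc
        simp only [mem_compl_iff, mem_insert_iff, mem_singleton_iff, not_or] at hz
        rcases eq_or_lt_of_le hc.1 with h | h
        · exact hz.1 h.symm
        rcases eq_or_lt_of_le hc.2 with h2 | h2
        · exact hz.2 h2
        · exact hmem ⟨h, h2⟩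
      simp only [hhrdef, hrdef, indicator_of_notMem hmem, indicator_of_notMem hIcc]
      simp
  rw [integral_congr_ae hae2, integral_indicator measurableSet_Ioo]
  have himg2 : g '' Ioi xstar = Ioo (0:ℝ) (1/2) := by
    apply Subset.antisymm
    · rintro y ⟨x, hx, rfl⟩
      exact hgmem x hx
    · intro z hz
      obtain ⟨x, hx1, hx2⟩ := hexu z hz
      exact ⟨x, hx1, hx2⟩
  have hinj2 : InjOn g (Ioi xstar) := hinj.mono Ioi_subset_Ici_self
  have hch2 : ∫ z in Ioo (0:ℝ) (1/2), |H z - 1 / Real.sqrt (1 - 2*z)|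
      = ∫ x in Ioi xstar, |gd x| • |H (g x) - 1 / Real.sqrt (1 - 2 * g x)| := by
    rw [← himg2, integral_image_eq_integral_abs_deriv_smul measurableSet_Ioi
      (fun x _ => (hgderiv x).hasDerivWithinAt) hinj2]
  have hptw : ∀ x ∈ Ioi xstar, |gd x| • |H (g x) - 1 / Real.sqrt (1 - 2 * g x)|
      = 2 * |fX x - fY x| := by
    intro x hx
    have hxgt : xstar < x := hx
    have hFgtx := hFgt x hxgt
    have hfy := hfYpos x
    have hHval : H (g x) = fX x / (fY x * (2 * F x - 1)) := by
      simp only [hHdef]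
      rw [hBg x hxgt, hsqrt x hxgt]
    have habs : |gd x| = 2 * fY x * (2 * F x - 1) := by
      rw [abs_of_nonpos (by simp only [hgddef]; nlinarith)]
      simp only [hgddef]; ring
    rw [hHval, hsqrt x hxgt, habs, smul_eq_mul]
    have ha : fY x ≠ 0 := hfy.ne'
    have hb : (2 * F x - 1) ≠ 0 := by linarith
    have hapos : (0:ℝ) < 2 * fY x * (2 * F x - 1) := by nlinarith
    rw [← abs_of_pos hapos, ← abs_mul]
    have hval : (2 * fY x * (2 * F x - 1)) * (fX x / (fY x * (2 * F x - 1)) - 1 / (2 * F x - 1))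
        = 2 * (fX x - fY x) := by
      field_simp
    rw [hval, abs_mul, abs_two]
  rw [hch2, setIntegral_congr_fun measurableSet_Ioi hptw]
  -- symmetry of |fX - fY| around xstar
  have habsint : Integrable (fun x => |fX x - fY x|) := (hfXint.sub hfYint).abs
  have habsym : ∀ t, (fun x => |fX x - fY x|) (xstar + t) = (fun x => |fX x - fY x|) (xstar - t) :=
    fun t => by simp only [hsymX t, hsymY t]
  have h1 : ∫ x in Iic xstar, |fX x - fY x| = ∫ x in Ici xstar, |fX x - fY x| := by
    have hr := aux_reflect (c := xstar) (f := fun x => |fX x - fY x|) habsym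
    simpa [show 2*xstar - xstar = xstar by ring] using hr
  have h2 : ∫ x in Ici xstar, |fX x - fY x| = ∫ x in Ioi xstar, |fX x - fY x| :=
    integral_Ici_eq_integral_Ioi
  have h3 : (∫ x in Iic xstar, |fX x - fY x|) + ∫ x in Ioi xstar, |fX x - fY x|
      = ∫ x, |fX x - fY x| :=
    intervalIntegral.integral_Iic_add_Ioi habsint.integrableOn habsint.integrableOn
  rw [integral_const_mul]
  have h4 : ∫ x in Ioi xstar, |fX x - fY x| = (1/2) * ∫ x, |fX x - fY x| := by
    rw [h1, h2] at h3
    linarith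
  rw [h4]
  ring

theorem tvd_eq {fX fY : ℝ → ℝ} (hfXc : Continuous fX) (hfYc : Continuous fY)
    (hfX0 : ∀ x, 0 ≤ fX x) (hfY0 : ∀ x, 0 ≤ fY x) :
    TVD (volume.withDensity fun x => ENNReal.ofReal (fX x))
      (volume.withDensity fun x => ENNReal.ofReal (fY x)) = (1/2) * ∫ x, |fX x - fY x| := by
  simp only [TVD]
  congr 1
  apply integral_congr_ae
  filter_upwards [Measure.rnDeriv_withDensity volume
      (show Measurable fun x => ENNReal.ofReal (fX x) from ENNReal.measurable_ofReal.comp hfXc.measurable),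
    Measure.rnDeriv_withDensity volume
      (show Measurable fun x => ENNReal.ofReal (fY x) from ENNReal.measurable_ofReal.comp hfYc.measurable)] with x h1 h2
  rw [h1, h2, ENNReal.toReal_ofReal (hfX0 x), ENNReal.toReal_ofReal (hfY0 x)]


/-- Let `P, Q` have everywhere positive continuous densities `fX, fY` and CDFs `FX, FY`,
both symmetric around a common center `x*`. Then
`TVD(P_Q^{SD}, R) = TVD(Q_P^{SD}, R) = TVD(P, Q)`, where `Q_P^{SD}` is the law of
`2 FY(X) (1 - FY(X))` for `X ~ P`, `P_Q^{SD}` is the law of `2 FX(Y) (1 - FX(Y))` for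
`Y ~ Q`, and `R` is the distribution on `[0, 1/2]` with density `r(z) = 1 / √(1 - 2 z)`. -/
theorem sd_induced_tvd_eq_of_symmetric_concentric
    (P Q : Measure ℝ) [IsProbabilityMeasure P] [IsProbabilityMeasure Q]
    (fX fY : ℝ → ℝ) (hfXpos : ∀ x, 0 < fX x) (hfYpos : ∀ x, 0 < fY x)
    (hfXc : Continuous fX) (hfYc : Continuous fY)
    (hP : P = volume.withDensity (fun x => ENNReal.ofReal (fX x)))
    (hQ : Q = volume.withDensity (fun x => ENNReal.ofReal (fY x)))
    (FX FY : ℝ → ℝ)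
    (hFX : ∀ x, FX x = (P (Iic x)).toReal)
    (hFY : ∀ x, FY x = (Q (Iic x)).toReal)
    (xstar : ℝ)
    (hsymX : ∀ t : ℝ, fX (xstar + t) = fX (xstar - t))
    (hsymY : ∀ t : ℝ, fY (xstar + t) = fY (xstar - t)) :
    TVD (Measure.map (fun y => 2 * FX y * (1 - FX y)) Q)
        (volume.withDensity (fun z => ENNReal.ofReal
          (indicator (Icc (0 : ℝ) (1 / 2)) (fun z => 1 / Real.sqrt (1 - 2 * z)) z)))
      = TVD P Q ∧
    TVD (Measure.map (fun x => 2 * FY x * (1 - FY x)) P)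
        (volume.withDensity (fun z => ENNReal.ofReal
          (indicator (Icc (0 : ℝ) (1 / 2)) (fun z => 1 / Real.sqrt (1 - 2 * z)) z)))
      = TVD P Q := by
  obtain ⟨hfXint, hfX1⟩ := aux_integrable hfXc (fun x => (hfXpos x).le)
    (by rw [← hP]; exact measure_univ)
  obtain ⟨hfYint, hfY1⟩ := aux_integrable hfYc (fun x => (hfYpos x).le)
    (by rw [← hQ]; exact measure_univ)
  have hFXe : ∀ x, FX x = ∫ t in Iic x, fX t := by
    intro x
    rw [hFX x, hP, aux_apply (fun x => (hfXpos x).le) hfXint measurableSet_Iic,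
      ENNReal.toReal_ofReal (setIntegral_nonneg measurableSet_Iic fun t _ => (hfXpos t).le)]
  have hFYe : ∀ x, FY x = ∫ t in Iic x, fY t := by
    intro x
    rw [hFY x, hQ, aux_apply (fun x => (hfYpos x).le) hfYint measurableSet_Iic,
      ENNReal.toReal_ofReal (setIntegral_nonneg measurableSet_Iic fun t _ => (hfYpos t).le)]
  have habscomm : ∫ x, |fY x - fX x| = ∫ x, |fX x - fY x| :=
    integral_congr_ae (ae_of_all _ fun x => abs_sub_comm _ _)
  have htvd : TVD P Q = (1/2) * ∫ x, |fX x - fY x| := by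
    rw [hP, hQ, tvd_eq hfXc hfYc (fun x => (hfXpos x).le) (fun x => (hfYpos x).le)]
  constructor
  · have hk := key fY fX hfYpos hfXpos hfYc hfXc hfYint hfXint hfY1 hfX1 xstar hsymY hsymX
    have hfun : (fun y => 2 * FX y * (1 - FX y))
        = fun y => 2 * (∫ t in Iic y, fX t) * (1 - (∫ t in Iic y, fX t)) := by
      funext y; rw [hFXe y]
    rw [htvd, ← habscomm, hfun, hQ, hk]
  · have hk := key fX fY hfXpos hfYpos hfXc hfYc hfXint hfYint hfX1 hfY1 xstar hsymX hsymY
    have hfun : (fun x => 2 * FY x * (1 - FY x))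
        = fun x => 2 * (∫ t in Iic x, fY t) * (1 - (∫ t in Iic x, fY t)) := by
      funext y; rw [hFYe y]
    rw [htvd, hfun, hP, hk]
end
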